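/- arXiv:2009.10851 — 3 statements merged into one kernel-verified Lean document; each statement's English description precedes it below -/
import Mathlib

section
/- Let q be a prime power, e ≥ 2, a ∈ F_{q^e} nonzero, r ≥ 1, f(x) = x^r(x^{q−1} + a), and ℓ = q^{e−1} + ⋯ + q + 1. Then the following two conditions are equivalent: (1) f permutes F_{q^e} and there exists a positive integer h such that f(x) = x^{r·q^h} + a·x^r for all x ∈ F_{q^e} (i.e., f is congruent modulo x^{q^e} − x to the composition of the linearized binomial L(x) = x^{q^h} + a·x with the monomial x^r); (2) (−a)^ℓ ≠ 1, gcd(r, q−1) = 1, and there exist a positive integer h with gcd(h, e) = 1 and a positive integer s such that r ≡ s·ℓ + Σ_{i=0}^{k−1} q^{h·i} (mod q^e − 1), where k is the unique integer in {1, …, e−1} with h·k ≡ 1 (mod e). -/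
private lemma aux_pow_eq_pow_iff {F : Type*} [Field F] [Fintype F] {m n : ℕ}
    (hm : 0 < m) (hn : 0 < n) :
    (∀ x : F, x ^ m = x ^ n) ↔ m ≡ n [MOD Fintype.card F - 1] := by
  obtain ⟨g, hg⟩ := IsCyclic.exists_generator (α := Fˣ)
  have hord : orderOf g = Fintype.card F - 1 := by
    rw [orderOf_eq_card_of_forall_mem_zpowers hg, Nat.card_units, Nat.card_eq_fintype_card]
  constructor
  · intro H
    have h1 : (g : F) ^ m = (g : F) ^ n := H g
    have h2 : g ^ m = g ^ n := Units.ext (by push_cast; exact h1)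
    rwa [pow_eq_pow_iff_modEq, hord] at h2
  · intro H x
    rcases eq_or_ne x 0 with rfl | hx
    · rw [zero_pow hm.ne', zero_pow hn.ne']
    · have h2 : (Units.mk0 x hx) ^ m = (Units.mk0 x hx) ^ n := by
        rw [pow_eq_pow_iff_modEq]
        exact Nat.ModEq.of_dvd (by rw [← Nat.card_eq_fintype_card, ← Nat.card_units]; exact orderOf_dvd_natCard _) H
      have h3 := congrArg Units.val h2
      push_cast at h3
      simpa using h3

private lemma aux_pow_bijective {F : Type*} [Field F] [Fintype F] {n : ℕ} (hn : 0 < n)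
    (hN : 1 < Fintype.card F - 1) :
    Function.Bijective (fun x : F => x ^ n) ↔ Nat.Coprime n (Fintype.card F - 1) := by
  set N := Fintype.card F - 1 with hNdef
  constructor
  · intro hbij
    by_contra hcop
    obtain ⟨g, hg⟩ := IsCyclic.exists_generator (α := Fˣ)
    have hord : orderOf g = N := by
      rw [orderOf_eq_card_of_forall_mem_zpowers hg, Nat.card_units, Nat.card_eq_fintype_card]
    set d := Nat.gcd n N with hd
    have hd0 : 0 < d := Nat.gcd_pos_of_pos_left _ hn
    have hd1 : 1 < d := by
      have h1 : d ≠ 1 := hcop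
      omega
    have hdN : d ∣ N := Nat.gcd_dvd_right n N
    have hNd_pos : 0 < N / d := Nat.div_pos (Nat.le_of_dvd (by omega) hdN) (by omega)
    have hNd_lt : N / d < N := Nat.div_lt_self (by omega) hd1
    have hu1 : g ^ (N / d) ≠ 1 := by
      intro h
      have h2 := orderOf_dvd_of_pow_eq_one h
      rw [hord] at h2
      exact absurd (Nat.le_of_dvd hNd_pos h2) (not_le.2 hNd_lt)
    have hun : (g ^ (N / d)) ^ n = 1 := by
      rw [← pow_mul, ← orderOf_dvd_iff_pow_eq_one, hord]
      obtain ⟨c, hc⟩ := Nat.gcd_dvd_left n N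
      refine ⟨c, ?_⟩
      rw [hc, ← mul_assoc, Nat.div_mul_cancel hdN]
    have hinj := hbij.injective (a₁ := ((g ^ (N / d) : Fˣ) : F)) (a₂ := (1 : F))
    simp only [one_pow] at hinj
    have : ((g ^ (N / d) : Fˣ) : F) = 1 := by
      apply hinj
      have := congrArg Units.val hun
      push_cast at this
      simpa using this
    exact hu1 (Units.ext (by simpa using this))
  · intro hcop
    obtain ⟨c, -, hc⟩ := Nat.exists_mul_mod_eq_one_of_coprime hcop hN
    have hc' : n * c ≡ 1 [MOD N] := by
      unfold Nat.ModEq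
      rw [hc, Nat.mod_eq_of_lt hN]
    have hcpos : 0 < c := by
      rcases Nat.eq_zero_or_pos c with rfl | h
      · simp at hc
      · exact h
    have hid : ∀ x : F, (x ^ n) ^ c = x := by
      intro x
      rw [← pow_mul]
      have := (aux_pow_eq_pow_iff (Nat.mul_pos hn hcpos) Nat.one_pos).2 hc' x
      simpa using this
    have hid2 : ∀ x : F, (x ^ c) ^ n = x := by
      intro x
      rw [← pow_mul, mul_comm, pow_mul]
      exact hid x
    exact Function.bijective_iff_has_inverse.2 ⟨fun x => x ^ c, hid, hid2⟩

private lemma aux_pow_surj {F : Type*} [Field F] [Fintype F] {n : ℕ} (hn : 0 < n)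
    {b : F} (hb : b ≠ 0)
    (hdN : Nat.gcd n (Fintype.card F - 1) < Fintype.card F - 1) :
    (∃ z : F, z ≠ 0 ∧ z ^ n = b) ↔
      b ^ ((Fintype.card F - 1) / Nat.gcd n (Fintype.card F - 1)) = 1 := by
  set N := Fintype.card F - 1 with hNdef
  set d := Nat.gcd n N with hd
  have hd0 : 0 < d := Nat.gcd_pos_of_pos_left _ hn
  have hdvdN : d ∣ N := Nat.gcd_dvd_right n N
  have hdvdn : d ∣ n := Nat.gcd_dvd_left n N
  have hNd_pos : 0 < N / d := Nat.div_pos (Nat.le_of_dvd (by omega) hdvdN) hd0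
  have hN : d * (N / d) = N := Nat.mul_div_cancel' hdvdN
  obtain ⟨g, hg⟩ := IsCyclic.exists_generator (α := Fˣ)
  have hord : orderOf g = N := by
    rw [orderOf_eq_card_of_forall_mem_zpowers hg, Nat.card_units, Nat.card_eq_fintype_card]
  obtain ⟨t, ht⟩ : Units.mk0 b hb ∈ Submonoid.powers g := by
    rw [mem_powers_iff_mem_zpowers]; exact hg _
  have ht' : g ^ t = Units.mk0 b hb := ht
  have hbt : b = (g : F) ^ t := by rw [← Units.val_pow_eq_pow_val, ht']; rfl
  have key : ∀ t' : ℕ, (N ∣ t' * (N / d) ↔ d ∣ t') := by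
    intro t'
    constructor
    · rintro ⟨c, hc⟩
      refine ⟨c, Nat.eq_of_mul_eq_mul_right hNd_pos ?_⟩
      rw [hc]
      conv_lhs => rw [← hN]
      ring
    · rintro ⟨c, rfl⟩
      refine ⟨c, ?_⟩
      conv_rhs => rw [← hN]
      ring
  constructor
  · rintro ⟨z, hz, hzb⟩
    obtain ⟨w, hw⟩ : Units.mk0 z hz ∈ Submonoid.powers g := by
      rw [mem_powers_iff_mem_zpowers]; exact hg _
    have hw' : g ^ w = Units.mk0 z hz := hw
    have hzw : z = (g : F) ^ w := by rw [← Units.val_pow_eq_pow_val, hw']; rfl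
    have hpow : (g ^ w) ^ n = g ^ t := by
      apply Units.ext
      push_cast
      rw [← hzw, ← hbt]
      exact hzb
    rw [← pow_mul, pow_eq_pow_iff_modEq, hord] at hpow
    have hmodd : w * n ≡ t [MOD d] := Nat.ModEq.of_dvd hdvdN hpow
    have hdt : d ∣ t := by
      have h1 : d ∣ w * n := Dvd.dvd.mul_left hdvdn w
      have h2 := (Nat.modEq_zero_iff_dvd).2 h1
      exact (Nat.modEq_zero_iff_dvd).1 (hmodd.symm.trans h2)
    rw [hbt, ← pow_mul]
    have h2 : g ^ (t * (N / d)) = 1 := by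
      rw [← orderOf_dvd_iff_pow_eq_one, hord]
      exact (key t).2 hdt
    have h3 := congrArg Units.val h2
    push_cast at h3
    exact h3
  · intro hb1
    have h1 : (g ^ t) ^ (N / d) = 1 := by
      apply Units.ext
      push_cast
      rw [← hbt]
      exact hb1
    rw [← pow_mul, ← orderOf_dvd_iff_pow_eq_one, hord] at h1
    obtain ⟨s, hs⟩ : d ∣ t := (key t).1 h1
    obtain ⟨c, -, hc⟩ := Nat.exists_mul_mod_eq_gcd hdN
    have hc' : n * c ≡ d [MOD N] := by
      unfold Nat.ModEq
      rw [hc, Nat.mod_eq_of_lt hdN]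
    refine ⟨(g : F) ^ (c * s), pow_ne_zero _ (Units.ne_zero g), ?_⟩
    rw [← pow_mul, hbt]
    have h4 : g ^ (c * s * n) = g ^ t := by
      rw [pow_eq_pow_iff_modEq, hord, hs]
      calc c * s * n = n * c * s := by ring
      _ ≡ d * s [MOD N] := hc'.mul_right s
    have h5 := congrArg Units.val h4
    push_cast at h5
    exact h5

private lemma aux_gcd_pow_sub_one {q : ℕ} (hq : 2 ≤ q) (h e : ℕ) :
    Nat.gcd (q ^ h - 1) (q ^ e - 1) = q ^ (Nat.gcd h e) - 1 := by
  induction h, e using Nat.gcd.induction with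
  | H0 e => simp
  | H1 h e hh IH =>
    have hq1 : ∀ k : ℕ, 1 ≤ q ^ k := fun k => Nat.one_le_pow _ _ (by omega)
    have hle : q ^ (e % h) ≤ q ^ e := Nat.pow_le_pow_right (by omega) (Nat.mod_le e h)
    have hmod : (q ^ e - 1) % (q ^ h - 1) = (q ^ (e % h) - 1) % (q ^ h - 1) := by
      have hdvd : (q ^ h - 1) ∣ (q ^ e - 1) - (q ^ (e % h) - 1) := by
        have heq : (q ^ e - 1) - (q ^ (e % h) - 1) = q ^ e - q ^ (e % h) := by
          have := hq1 (e % h); have := hq1 e; omega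
        rw [heq]
        have hdecomp : q ^ e = q ^ (e % h) * (q ^ h) ^ (e / h) := by
          rw [← pow_mul, ← pow_add, Nat.mod_add_div]
        have h2 : q ^ e - q ^ (e % h) = q ^ (e % h) * ((q ^ h) ^ (e / h) - 1) := by
          rw [Nat.mul_sub, mul_one, ← hdecomp]
        rw [h2]
        exact Dvd.dvd.mul_left (by simpa using Nat.sub_dvd_pow_sub_pow (q ^ h) 1 (e / h)) _
      have hle2 : q ^ (e % h) - 1 ≤ q ^ e - 1 := by have := hq1 (e % h); omega
      exact ((Nat.modEq_iff_dvd' hle2).2 hdvd).symm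
    rw [Nat.gcd_rec (q ^ h - 1) (q ^ e - 1), hmod, ← Nat.gcd_rec, Nat.gcd_comm,
      IH, Nat.gcd_rec h e]

private lemma aux_L_bij {F : Type*} [Field F] [Fintype F] {p : ℕ} [hp : Fact p.Prime]
    [CharP F p] (n : ℕ) (a : F) :
    Function.Bijective (fun x : F => x ^ p ^ n + a * x) ↔
      ¬∃ z : F, z ≠ 0 ∧ z ^ (p ^ n - 1) = -a := by
  have hQ : 0 < p ^ n := Nat.pow_pos hp.out.pos
  have hQ1 : p ^ n - 1 + 1 = p ^ n := by omega
  constructor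
  · rintro hbij ⟨z, hz, hza⟩
    have h1 : z ^ p ^ n + a * z = 0 ^ p ^ n + a * 0 := by
      rw [← hQ1, pow_succ, hza, zero_pow (by omega), mul_zero, add_zero]
      ring
    exact hz (hbij.injective h1)
  · intro hno
    apply Finite.injective_iff_bijective.1
    intro x y hxy
    by_contra hne
    have hz : x - y ≠ 0 := sub_ne_zero.2 hne
    apply hno
    refine ⟨x - y, hz, ?_⟩
    have hfrob : (x - y) ^ p ^ n = x ^ p ^ n - y ^ p ^ n := sub_pow_char_pow x y n
    simp only at hxy
    have h2 : (x - y) ^ p ^ n = -a * (x - y) := by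
      rw [hfrob]
      have : x ^ p ^ n - y ^ p ^ n = a * y - a * x := by
        have := hxy
        linear_combination this
      rw [this]; ring
    have h3 : (x - y) ^ (p ^ n - 1) * (x - y) = -a * (x - y) := by
      rw [← pow_succ, hQ1]
      exact h2
    exact mul_right_cancel₀ hz h3


/-- `f(x) = x^r (x^{q-1} + a)` permutes `F_{q^e}` and is the composition of a linearized
binomial `x^{q^h} + a x` and the monomial `x^r` if and only if `(-a)^ℓ ≠ 1`,
`gcd(r, q-1) = 1`, and `r ≡ sℓ + Σ_{i=0}^{k-1} q^{hi} (mod q^e - 1)` for some positive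
integers `s` and `h` with `gcd(h, e) = 1`, where `k ∈ {1, …, e-1}` satisfies
`hk ≡ 1 (mod e)` and `ℓ = q^{e-1} + ⋯ + q + 1`. -/
theorem stmt_8 (p m q e : ℕ) (hp : p.Prime) (hm : 0 < m) (hq : q = p ^ m)
    (he : 2 ≤ e) {F : Type*} [Field F] [Fintype F] (hF : Fintype.card F = q ^ e)
    (a : F) (ha : a ≠ 0) (r : ℕ) (hr : 1 ≤ r)
    (ℓ : ℕ) (hℓ : ℓ = ∑ i ∈ Finset.range e, q ^ i) :
    (Function.Bijective (fun x : F => x ^ r * (x ^ (q - 1) + a)) ∧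
      ∃ h : ℕ, 0 < h ∧
        ∀ x : F, x ^ r * (x ^ (q - 1) + a) = x ^ (r * q ^ h) + a * x ^ r) ↔
    ((-a) ^ ℓ ≠ 1 ∧ Nat.gcd r (q - 1) = 1 ∧
      ∃ h k s : ℕ, 0 < h ∧ Nat.gcd h e = 1 ∧ 1 ≤ k ∧ k ≤ e - 1 ∧ h * k ≡ 1 [MOD e] ∧
        0 < s ∧ r ≡ s * ℓ + ∑ i ∈ Finset.range k, q ^ (h * i) [MOD q ^ e - 1]) := by
  have hq2 : 2 ≤ q := by
    rw [hq]
    calc 2 ≤ p := hp.two_le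
    _ = p ^ 1 := (pow_one p).symm
    _ ≤ p ^ m := Nat.pow_le_pow_right hp.pos hm
  set N := q ^ e - 1 with hNdef
  have hqe4 : 4 ≤ q ^ e := by
    calc (4 : ℕ) = 2 ^ 2 := rfl
    _ ≤ 2 ^ e := Nat.pow_le_pow_right (by omega) he
    _ ≤ q ^ e := Nat.pow_le_pow_left hq2 e
  have hN3 : 3 ≤ N := by omega
  have hcard : Fintype.card F - 1 = N := by rw [hF]
  -- ℓ * (q - 1) = N
  have hℓq : ℓ * (q - 1) = N := by
    have hg : ((ℓ : ℤ)) * ((q : ℤ) - 1) = (q : ℤ) ^ e - 1 := by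
      rw [hℓ]
      push_cast
      exact geom_sum_mul (q : ℤ) e
    have h1 : ((ℓ * (q - 1) : ℕ) : ℤ) = (N : ℤ) := by
      rw [Nat.cast_mul, Nat.cast_sub (by omega : 1 ≤ q), hNdef,
        Nat.cast_sub (by omega : 1 ≤ q ^ e)]
      push_cast
      linear_combination hg
    exact_mod_cast h1
  have hℓge : q + 1 ≤ ℓ := by
    rw [hℓ]
    calc q + 1 = ∑ i ∈ Finset.range 2, q ^ i := by
          simp [Finset.sum_range_succ]
          omega
    _ ≤ ∑ i ∈ Finset.range e, q ^ i :=
        Finset.sum_le_sum_of_subset (Finset.range_subset_range.2 he)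
  have hq1N : q - 1 < N := by
    rw [← hℓq]
    exact lt_mul_of_one_lt_left (by omega) (by omega)
  have hq1dvdN : q - 1 ∣ N := ⟨ℓ, by rw [← hℓq]; ring⟩
  have hNZ : (N : ℤ) = (ℓ : ℤ) * ((q : ℤ) - 1) := by
    rw [← hℓq]
    push_cast [Nat.cast_sub (by omega : 1 ≤ q)]
    ring
  -- characteristic
  haveI hfact : Fact p.Prime := ⟨hp⟩
  haveI hpF : CharP F p := by
    obtain ⟨n, hrc, hcn⟩ := FiniteField.card F (ringChar F)
    have h1 : p ∣ ringChar F ^ (n : ℕ) := by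
      rw [← hcn, hF, hq, ← pow_mul]
      exact dvd_pow_self p (by positivity)
    have h2 : p = ringChar F := (Nat.prime_dvd_prime_iff_eq hp hrc).1 (hp.dvd_of_dvd_pow h1)
    rw [h2]
    exact ringChar.charP F
  -- identity iff congruence
  have hid_iff : ∀ h : ℕ,
      ((∀ x : F, x ^ r * (x ^ (q - 1) + a) = x ^ (r * q ^ h) + a * x ^ r) ↔
        r + (q - 1) ≡ r * q ^ h [MOD N]) := by
    intro h
    have expand : ∀ x : F, x ^ r * (x ^ (q - 1) + a) = x ^ (r + (q - 1)) + a * x ^ r := by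
      intro x; rw [pow_add]; ring
    have hpos1 : 0 < r + (q - 1) := by omega
    have hpos2 : 0 < r * q ^ h := Nat.mul_pos hr (by positivity)
    constructor
    · intro H
      rw [← hcard]
      apply (aux_pow_eq_pow_iff hpos1 hpos2).1
      intro x
      have h1 := (expand x).symm.trans (H x)
      exact add_right_cancel h1
    · intro H x
      rw [expand x]
      have h1 := (aux_pow_eq_pow_iff hpos1 hpos2).2 (by rw [hcard]; exact H) x
      rw [h1]
  -- bijectivity split
  have hbij_iff : ∀ h : ℕ,
      (∀ x : F, x ^ r * (x ^ (q - 1) + a) = x ^ (r * q ^ h) + a * x ^ r) →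
      (Function.Bijective (fun x : F => x ^ r * (x ^ (q - 1) + a)) ↔
        (Nat.Coprime r N ∧ Function.Bijective (fun y : F => y ^ q ^ h + a * y))) := by
    intro h hid
    have hfg : (fun x : F => x ^ r * (x ^ (q - 1) + a)) =
        (fun y : F => y ^ q ^ h + a * y) ∘ (fun x : F => x ^ r) := by
      funext x
      simp only [Function.comp_apply]
      rw [hid x, ← pow_mul]
    rw [hfg]
    constructor
    · intro hbij
      have hinj1 : Function.Injective (fun x : F => x ^ r) :=
        Function.Injective.of_comp hbij.injective
      have hbij1 : Function.Bijective (fun x : F => x ^ r) :=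
        Finite.injective_iff_bijective.1 hinj1
      have hsurj2 : Function.Surjective (fun y : F => y ^ q ^ h + a * y) :=
        Function.Surjective.of_comp hbij.surjective
      have hbij2 : Function.Bijective (fun y : F => y ^ q ^ h + a * y) :=
        Finite.surjective_iff_bijective.1 hsurj2
      refine ⟨?_, hbij2⟩
      rw [← hcard]
      exact (aux_pow_bijective hr (by omega)).1 hbij1
    · rintro ⟨hcop, hbij2⟩
      exact hbij2.comp ((aux_pow_bijective hr (by omega)).2 (by rw [hcard]; exact hcop))
  -- gcd of q^h-1 and N
  have hgcdQ : ∀ h : ℕ, Nat.gcd h e = 1 → Nat.gcd (q ^ h - 1) N = q - 1 := by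
    intro h hhe
    rw [hNdef, aux_gcd_pow_sub_one hq2 h e, hhe, pow_one]
  -- L bijective iff (-a)^ℓ ≠ 1, for gcd h e = 1, h > 0
  have hLbij_iff : ∀ h : ℕ, 0 < h → Nat.gcd h e = 1 →
      (Function.Bijective (fun y : F => y ^ q ^ h + a * y) ↔ (-a) ^ ℓ ≠ 1) := by
    intro h hh0 hhe
    have hqh : q ^ h = p ^ (m * h) := by rw [hq, ← pow_mul]
    have hqh2 : 2 ≤ q ^ h := by
      calc 2 ≤ q := hq2
      _ = q ^ 1 := (pow_one q).symm
      _ ≤ q ^ h := Nat.pow_le_pow_right (by omega) hh0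
    have h1 : Function.Bijective (fun y : F => y ^ q ^ h + a * y) ↔
        ¬∃ z : F, z ≠ 0 ∧ z ^ (q ^ h - 1) = -a := by
      rw [hqh]
      exact aux_L_bij (m * h) a
    rw [h1]
    have h2 := aux_pow_surj (n := q ^ h - 1) (by omega) (b := -a) (neg_ne_zero.2 ha)
      (by rw [hcard, hgcdQ h hhe]; exact hq1N)
    rw [hcard, hgcdQ h hhe] at h2
    have h3 : N / (q - 1) = ℓ := by
      rw [← hℓq]
      exact Nat.mul_div_cancel _ (by omega)
    rw [h3] at h2
    rw [h2]
  -- key geometric congruence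
  have hkey : ∀ h k : ℕ, 0 < h → 1 ≤ k → h * k ≡ 1 [MOD e] →
      (N : ℤ) ∣ (∑ i ∈ Finset.range k, (q : ℤ) ^ (h * i)) * ((q : ℤ) ^ h - 1) -
        ((q : ℤ) - 1) := by
    intro h k hh0 hk1 hkmod
    have hhk1 : 1 ≤ h * k := Nat.mul_pos hh0 hk1
    obtain ⟨t, ht⟩ := (Nat.modEq_iff_dvd' hhk1).1 hkmod.symm
    have hhk : h * k = 1 + e * t := by omega
    have hgeo : (∑ i ∈ Finset.range k, (q : ℤ) ^ (h * i)) * ((q : ℤ) ^ h - 1) =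
        (q : ℤ) ^ (h * k) - 1 := by
      have h0 : ∀ i : ℕ, (q : ℤ) ^ (h * i) = ((q : ℤ) ^ h) ^ i := fun i => by
        rw [← pow_mul]
      simp_rw [h0]
      rw [geom_sum_mul, ← pow_mul]
    rw [hgeo, hhk]
    have hdvd : (N : ℤ) ∣ ((q : ℤ) ^ e) ^ t - 1 := by
      have h4 : ((q ^ e - 1 : ℕ) : ℤ) ∣ (((q ^ e) ^ t - 1 : ℕ) : ℤ) :=
        Int.natCast_dvd_natCast.2 (by simpa using Nat.sub_dvd_pow_sub_pow (q ^ e) 1 t)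
      have h5 : ((q ^ e - 1 : ℕ) : ℤ) = (q : ℤ) ^ e - 1 := by
        push_cast [Nat.cast_sub (by omega : 1 ≤ q ^ e)]
        ring
      have h6 : (((q ^ e) ^ t - 1 : ℕ) : ℤ) = ((q : ℤ) ^ e) ^ t - 1 := by
        push_cast [Nat.cast_sub (Nat.one_le_pow _ _ (by omega) : 1 ≤ (q ^ e) ^ t)]
        ring
      rw [h5, h6] at h4
      rw [hNdef, h5]
      exact h4
    obtain ⟨c, hc⟩ := hdvd
    refine ⟨(q : ℤ) * c, ?_⟩
    have : (q : ℤ) ^ (1 + e * t) = (q : ℤ) * ((q : ℤ) ^ e) ^ t := by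
      rw [pow_add, pow_one, pow_mul]
    rw [this]
    linear_combination (q : ℤ) * hc
  -- write q^h - 1 = (q-1) * u with gcd u ℓ = 1, for gcd h e = 1
  have hfactorQ : ∀ h : ℕ, Nat.gcd h e = 1 →
      ∃ u : ℕ, (q - 1) * u = q ^ h - 1 ∧ Nat.gcd u ℓ = 1 := by
    intro h hhe
    have hdvd : q - 1 ∣ q ^ h - 1 := by
      simpa using Nat.sub_dvd_pow_sub_pow q 1 h
    obtain ⟨u, hu⟩ := hdvd
    refine ⟨u, hu.symm, ?_⟩
    have h1 := hgcdQ h hhe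
    rw [hu, ← hℓq, mul_comm ℓ (q - 1), Nat.gcd_mul_left] at h1
    have h2 : (q - 1) * Nat.gcd u ℓ = (q - 1) * 1 := by rw [mul_one]; exact h1
    exact Nat.eq_of_mul_eq_mul_left (by omega) h2
  constructor
  · rintro ⟨hbij, h, hh0, hid⟩
    have hcong : r + (q - 1) ≡ r * q ^ h [MOD N] := (hid_iff h).1 hid
    have hcongZ : (N : ℤ) ∣ (r : ℤ) * ((q : ℤ) ^ h - 1) - ((q : ℤ) - 1) := by
      have h1 := (Nat.modEq_iff_dvd (n := N)).1 hcong
      have h2 : ((r * q ^ h : ℕ) : ℤ) - ((r + (q - 1) : ℕ) : ℤ) =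
          (r : ℤ) * ((q : ℤ) ^ h - 1) - ((q : ℤ) - 1) := by
        push_cast [Nat.cast_sub (by omega : 1 ≤ q)]
        ring
      rwa [h2] at h1
    -- gcd h e = 1
    have hgcd1 : Nat.gcd h e = 1 := by
      set dd := Nat.gcd h e with hdd
      have hdd_pos : 0 < dd := Nat.gcd_pos_of_pos_left e hh0
      have hcast : ∀ j : ℕ, ((q ^ j - 1 : ℕ) : ℤ) = (q : ℤ) ^ j - 1 := by
        intro j
        push_cast [Nat.cast_sub (Nat.one_le_pow _ _ (by omega) : 1 ≤ q ^ j)]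
        ring
      have hd1 : ((q ^ dd - 1 : ℕ) : ℤ) ∣ (q : ℤ) ^ h - 1 := by
        obtain ⟨c, hc⟩ := hdd ▸ Nat.gcd_dvd_left h e
        have : (q ^ dd - 1 : ℕ) ∣ (q ^ h - 1 : ℕ) := by
          rw [hc, pow_mul]
          simpa using Nat.sub_dvd_pow_sub_pow (q ^ dd) 1 c
        have := Int.natCast_dvd_natCast.2 this
        rwa [hcast h] at this
      have hd2 : ((q ^ dd - 1 : ℕ) : ℤ) ∣ (N : ℤ) := by
        obtain ⟨c, hc⟩ := hdd ▸ Nat.gcd_dvd_right h e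
        have : (q ^ dd - 1 : ℕ) ∣ N := by
          rw [hNdef, hc, pow_mul]
          simpa using Nat.sub_dvd_pow_sub_pow (q ^ dd) 1 c
        exact Int.natCast_dvd_natCast.2 this
      have hd3 : ((q ^ dd - 1 : ℕ) : ℤ) ∣ (q : ℤ) - 1 := by
        have h4 : ((q ^ dd - 1 : ℕ) : ℤ) ∣
            (r : ℤ) * ((q : ℤ) ^ h - 1) - ((r : ℤ) * ((q : ℤ) ^ h - 1) - ((q : ℤ) - 1)) :=
          dvd_sub (Dvd.dvd.mul_left hd1 _) (hd2.trans hcongZ)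
        simpa using h4
      have hd4 : (q ^ dd - 1 : ℕ) ∣ (q - 1 : ℕ) := by
        rw [← Int.natCast_dvd_natCast]
        rwa [Nat.cast_sub (by omega : 1 ≤ q)]
      have hd5 : q ^ dd - 1 ≤ q - 1 := Nat.le_of_dvd (by omega) hd4
      have hd6 : q ^ dd ≤ q ^ 1 := by
        rw [pow_one]
        have := Nat.one_le_pow dd q (by omega)
        omega
      have hd7 : dd ≤ 1 := (Nat.pow_le_pow_iff_right (by omega : 1 < q)).1 hd6
      omega
    obtain ⟨hcopr, hLbij⟩ := (hbij_iff h hid).1 hbij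
    have hna : (-a) ^ ℓ ≠ 1 := (hLbij_iff h hh0 hgcd1).1 hLbij
    have hcoprq : Nat.gcd r (q - 1) = 1 := Nat.Coprime.coprime_dvd_right hq1dvdN hcopr
    -- construct k
    obtain ⟨c, -, hc⟩ := Nat.exists_mul_mod_eq_one_of_coprime hgcd1 (by omega : 1 < e)
    set k := c % e with hk
    have hkmod : h * k ≡ 1 [MOD e] := by
      have h1 : h * k ≡ h * c [MOD e] := (Nat.mod_modEq c e).mul_left h
      have h2 : h * c ≡ 1 [MOD e] := by
        unfold Nat.ModEq
        rw [hc, Nat.mod_eq_of_lt (by omega)]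
      exact h1.trans h2
    have hke : k ≤ e - 1 := by
      have := Nat.mod_lt c (show 0 < e by omega)
      omega
    have hk1 : 1 ≤ k := by
      rcases Nat.eq_zero_or_pos k with hk0 | hk0
      · exfalso
        rw [hk0, mul_zero] at hkmod
        have : (0 : ℕ) % e = 1 % e := hkmod
        rw [Nat.zero_mod, Nat.mod_eq_of_lt (by omega)] at this
        omega
      · exact hk0
    -- key congruence and s
    have hkeyh := hkey h k hh0 hk1 hkmod
    obtain ⟨u, hu, huℓ⟩ := hfactorQ h hgcd1
    have huZ : ((q : ℤ) - 1) * (u : ℤ) = (q : ℤ) ^ h - 1 := by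
      have := congrArg (fun x : ℕ => (x : ℤ)) hu
      push_cast [Nat.cast_sub (by omega : 1 ≤ q),
        Nat.cast_sub (Nat.one_le_pow _ _ (by omega) : 1 ≤ q ^ h)] at this
      exact this
    set Sk : ℕ := ∑ i ∈ Finset.range k, q ^ (h * i) with hSk
    have hSkZ : ((Sk : ℕ) : ℤ) = ∑ i ∈ Finset.range k, (q : ℤ) ^ (h * i) := by
      rw [hSk]
      push_cast
      rfl
    have hdvd2 : (N : ℤ) ∣ ((r : ℤ) - (Sk : ℤ)) * ((q : ℤ) ^ h - 1) := by
      have h1 : (N : ℤ) ∣ ((r : ℤ) * ((q : ℤ) ^ h - 1) - ((q : ℤ) - 1)) -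
          ((∑ i ∈ Finset.range k, (q : ℤ) ^ (h * i)) * ((q : ℤ) ^ h - 1) - ((q : ℤ) - 1)) :=
        dvd_sub hcongZ hkeyh
      rw [hSkZ]
      convert h1 using 1
      ring
    have hℓdvd : (ℓ : ℤ) ∣ (r : ℤ) - (Sk : ℤ) := by
      rw [← huZ] at hdvd2
      rw [hNZ] at hdvd2
      have h1 : (ℓ : ℤ) ∣ ((r : ℤ) - (Sk : ℤ)) * (u : ℤ) := by
        rcases hdvd2 with ⟨c2, hc2⟩
        refine ⟨c2, ?_⟩
        have hq1ne : ((q : ℤ) - 1) ≠ 0 := by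
          have : (2 : ℤ) ≤ (q : ℤ) := by exact_mod_cast hq2
          omega
        apply mul_left_cancel₀ hq1ne
        linear_combination hc2
      have hcop : IsCoprime ((ℓ : ℤ)) ((u : ℤ)) := by
        rw [Int.isCoprime_iff_gcd_eq_one, Int.gcd_natCast_natCast]
        rw [Nat.gcd_comm]
        exact huℓ
      exact hcop.dvd_of_dvd_mul_right h1
    obtain ⟨t2, ht2⟩ := hℓdvd
    -- choose s
    have hq1Zpos : (0 : ℤ) < (q : ℤ) - 1 := by
      have : (2 : ℤ) ≤ (q : ℤ) := by exact_mod_cast hq2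
      omega
    set t3 := t2 % ((q : ℤ) - 1) with ht3
    have ht3nonneg : 0 ≤ t3 := Int.emod_nonneg t2 (by omega)
    have ht3mod : t3 ≡ t2 [ZMOD ((q : ℤ) - 1)] := by
      show t3 % ((q : ℤ) - 1) = t2 % ((q : ℤ) - 1)
      rw [ht3]
      exact Int.emod_emod_of_dvd t2 dvd_rfl
    set s : ℕ := if t3 = 0 then q - 1 else t3.toNat with hs
    have hspos : 0 < s := by
      rw [hs]
      split
      · omega
      · next hne => omega
    have hsmod : ((s : ℕ) : ℤ) ≡ t2 [ZMOD ((q : ℤ) - 1)] := by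
      rw [hs]
      split
      · next h0 =>
        have : ((q - 1 : ℕ) : ℤ) = (q : ℤ) - 1 := by
          push_cast [Nat.cast_sub (by omega : 1 ≤ q)]; ring
        rw [this]
        calc (q : ℤ) - 1 ≡ 0 [ZMOD ((q : ℤ) - 1)] := (Int.modEq_zero_iff_dvd).2 dvd_rfl
        _ = t3 := h0.symm
        _ ≡ t2 [ZMOD ((q : ℤ) - 1)] := ht3mod
      · next hne =>
        rw [Int.toNat_of_nonneg ht3nonneg]
        exact ht3mod
    have hfinal : r ≡ s * ℓ + Sk [MOD N] := by
      rw [Nat.modEq_iff_dvd]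
      have h1 : ((s * ℓ + Sk : ℕ) : ℤ) - (r : ℤ) = (ℓ : ℤ) * ((s : ℤ) - t2) := by
        push_cast
        linear_combination -ht2
      rw [h1, hNZ]
      have h2 : ((q : ℤ) - 1) ∣ ((s : ℤ) - t2) := Int.ModEq.dvd hsmod.symm
      obtain ⟨w, hw⟩ := h2
      exact ⟨w, by rw [hw]; ring⟩
    exact ⟨hna, hcoprq, h, k, s, hh0, hgcd1, hk1, hke, hkmod, hspos, by
      rw [hNdef] at hfinal; exact hfinal⟩
  · rintro ⟨hna, hrq1, h, k, s, hh0, hhe1, hk1, hke, hkmod, hspos, hrmod⟩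
    have hkeyh := hkey h k hh0 hk1 hkmod
    obtain ⟨u, hu, huℓ⟩ := hfactorQ h hhe1
    have huZ : ((q : ℤ) - 1) * (u : ℤ) = (q : ℤ) ^ h - 1 := by
      have := congrArg (fun x : ℕ => (x : ℤ)) hu
      push_cast [Nat.cast_sub (by omega : 1 ≤ q),
        Nat.cast_sub (Nat.one_le_pow _ _ (by omega) : 1 ≤ q ^ h)] at this
      exact this
    set Sk : ℕ := ∑ i ∈ Finset.range k, q ^ (h * i) with hSk
    have hSkZ : ((Sk : ℕ) : ℤ) = ∑ i ∈ Finset.range k, (q : ℤ) ^ (h * i) := by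
      rw [hSk]
      push_cast
      rfl
    have hrmodZ : (N : ℤ) ∣ ((s * ℓ + Sk : ℕ) : ℤ) - (r : ℤ) :=
      (Nat.modEq_iff_dvd).1 hrmod
    have hcongZ : (N : ℤ) ∣ (r : ℤ) * ((q : ℤ) ^ h - 1) - ((q : ℤ) - 1) := by
      have h1 : (N : ℤ) ∣ ((r : ℤ) - ((s * ℓ + Sk : ℕ) : ℤ)) * ((q : ℤ) ^ h - 1) :=
        Dvd.dvd.mul_right (by simpa using (dvd_neg.2 hrmodZ)) _
      have h2 : (N : ℤ) ∣ (s : ℤ) * (ℓ : ℤ) * ((q : ℤ) ^ h - 1) := by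
        rw [← huZ, hNZ]
        exact ⟨(s : ℤ) * (u : ℤ), by ring⟩
      have h3 : (N : ℤ) ∣ _ := dvd_add (dvd_add h1 h2) hkeyh
      convert h3 using 1
      push_cast
      rw [hSkZ]
      ring
    have hcong : r + (q - 1) ≡ r * q ^ h [MOD N] := by
      rw [Nat.modEq_iff_dvd]
      have h2 : ((r * q ^ h : ℕ) : ℤ) - ((r + (q - 1) : ℕ) : ℤ) =
          (r : ℤ) * ((q : ℤ) ^ h - 1) - ((q : ℤ) - 1) := by
        push_cast [Nat.cast_sub (by omega : 1 ≤ q)]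
        ring
      rw [h2]
      exact hcongZ
    have hid : ∀ x : F, x ^ r * (x ^ (q - 1) + a) = x ^ (r * q ^ h) + a * x ^ r :=
      (hid_iff h).2 hcong
    -- gcd r N = 1
    have hcopr : Nat.Coprime r N := by
      set d := Nat.gcd r N with hd
      have hd1 : (d : ℤ) ∣ (q : ℤ) - 1 := by
        have hdr : (d : ℤ) ∣ (r : ℤ) := Int.natCast_dvd_natCast.2 (Nat.gcd_dvd_left r N)
        have hdN : (d : ℤ) ∣ (N : ℤ) := Int.natCast_dvd_natCast.2 (Nat.gcd_dvd_right r N)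
        have h4 : (d : ℤ) ∣ (r : ℤ) * ((q : ℤ) ^ h - 1) -
            ((r : ℤ) * ((q : ℤ) ^ h - 1) - ((q : ℤ) - 1)) :=
          dvd_sub (Dvd.dvd.mul_right hdr _) (hdN.trans hcongZ)
        simpa using h4
      have hd2 : d ∣ q - 1 := by
        rw [← Int.natCast_dvd_natCast]
        rwa [Nat.cast_sub (by omega : 1 ≤ q)]
      have hd3 : d ∣ Nat.gcd r (q - 1) := Nat.dvd_gcd (Nat.gcd_dvd_left r N) hd2
      rw [hrq1] at hd3
      exact Nat.eq_one_of_dvd_one hd3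
    have hLbij : Function.Bijective (fun y : F => y ^ q ^ h + a * y) :=
      (hLbij_iff h hh0 hhe1).2 hna
    refine ⟨(hbij_iff h hid).2 ⟨hcopr, hLbij⟩, h, hh0, hid⟩
end

section
/- Let q ≥ 3 be a prime power, e ≥ 2, a ∈ F_{q^e} nonzero, r ≥ 1, f(x) = x^r(x^{q−1} + a), and ℓ = q^{e−1} + ⋯ + q + 1. If the least nonnegative residue of r modulo ℓ is not of the form h·q + 1 for any integer h, then f does not permute F_{q^e}. -/
lemma aux_choose_p_sub_one {p : ℕ} (hp : p.Prime) : ∀ j, j < p → ¬ p ∣ (p-1).choose j := by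
  intro j
  induction j with
  | zero =>
    intro _ h
    rw [Nat.choose_zero_right] at h
    exact (hp.one_lt.ne' (Nat.dvd_one.mp h)).elim
  | succ j ih =>
    intro hj hdvd
    have hj' : j < p := by omega
    have hpascal : (p-1).choose j + (p-1).choose (j+1) = p.choose (j+1) := by
      have h1 : p - 1 + 1 = p := Nat.succ_pred_eq_of_pos hp.pos
      conv_rhs => rw [← h1]
      rw [Nat.choose_succ_succ]
    have hself : p ∣ p.choose (j+1) := hp.dvd_choose_self (by omega) (by omega)
    have hA : p ∣ (p-1).choose j := by
      have := Nat.dvd_sub hself hdvd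
      rwa [← hpascal, Nat.add_sub_cancel] at this
    exact ih hj' hA

lemma aux_choose_pow {p : ℕ} (hp : p.Prime) : ∀ L k, k ≤ p^L - 1 → ¬ p ∣ (p^L - 1).choose k := by
  have : Fact p.Prime := ⟨hp⟩
  intro L
  induction L with
  | zero =>
    intro k hk h
    have hk0 : k = 0 := by simpa using hk
    subst hk0
    rw [Nat.choose_zero_right] at h
    exact (hp.one_lt.ne' (Nat.dvd_one.mp h)).elim
  | succ L ih =>
    intro k hk hdvd
    have hp2 : 2 ≤ p := hp.two_le
    have hpow : 1 ≤ p ^ L := Nat.one_le_pow _ _ hp.pos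
    have hdecomp : p ^ (L+1) - 1 = (p - 1) + p * (p ^ L - 1) := by
      have : p ^ (L+1) = p * p ^ L := by ring
      rw [this]
      have := hp.two_le
      have h2 : p * p ^ L ≥ p * 1 := Nat.mul_le_mul_left p hpow
      rw [Nat.mul_sub_one] at *
      omega
    have hmod : (p ^ (L+1) - 1) % p = p - 1 := by
      rw [hdecomp, Nat.add_mul_mod_self_left, Nat.mod_eq_of_lt (by omega)]
    have hdiv : (p ^ (L+1) - 1) / p = p ^ L - 1 := by
      rw [hdecomp, Nat.add_mul_div_left _ _ hp.pos, Nat.div_eq_of_lt (by omega)]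
      omega
    have hlucas := Choose.choose_modEq_choose_mod_mul_choose_div_nat
      (n := p ^ (L+1) - 1) (k := k) (p := p)
    rw [hmod, hdiv] at hlucas
    have h0 : p ∣ (p-1).choose (k % p) * (p ^ L - 1).choose (k / p) := by
      have := (Nat.modEq_zero_iff_dvd.mpr hdvd).symm.trans hlucas
      exact Nat.modEq_zero_iff_dvd.mp this.symm
    rcases (hp.dvd_mul.mp h0) with h1 | h2
    · exact aux_choose_p_sub_one hp (k % p) (Nat.mod_lt _ hp.pos) h1
    · have hk' : k / p ≤ p ^ L - 1 := by
        have : k / p ≤ (p ^ (L+1) - 1) / p := Nat.div_le_div_right hk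
        rwa [hdiv] at this
      exact ih (k / p) hk' h2

lemma aux_geom (q : ℕ) (hq : 1 ≤ q) : ∀ k, (q - 1) * ∑ i ∈ Finset.range k, q ^ i = q ^ k - 1 := by
  intro k
  induction k with
  | zero => simp
  | succ k ih =>
    rw [Finset.sum_range_succ, Nat.mul_add, ih]
    have h1 : (q - 1) * q ^ k = q * q ^ k - q ^ k := by
      rw [Nat.sub_mul, one_mul]
    have h2 : q ^ (k+1) = q * q ^ k := by ring
    have h3 : 1 ≤ q ^ k := Nat.one_le_pow _ _ hq
    have h4 : q ^ k ≤ q * q ^ k := Nat.le_mul_of_pos_left _ hq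
    omega

lemma aux_sum_pow (F : Type*) [Field F] [Fintype F] [DecidableEq F] (m : ℕ) (hm : m ≠ 0) :
    ∑ x : F, x ^ m = if (Fintype.card F - 1) ∣ m then -1 else 0 := by
  let φ : Fˣ ↪ F := ⟨fun x ↦ x, fun _ _ h => Units.ext h⟩
  have huniv : Finset.univ.map φ = Finset.univ \ {0} := by
    ext x
    simp only [Finset.mem_map, Finset.mem_univ, Function.Embedding.coeFn_mk, true_and,
      Finset.mem_sdiff, Finset.mem_singleton, φ]
    exact isUnit_iff_ne_zero
  calc
    ∑ x : F, x ^ m = ∑ x ∈ Finset.univ \ {(0 : F)}, x ^ m := by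
      rw [← Finset.sum_sdiff (Finset.singleton_subset_iff.mpr (Finset.mem_univ 0)),
        Finset.sum_singleton, zero_pow hm, add_zero]
    _ = ∑ x : Fˣ, (x : F) ^ m := by rw [← huniv, Finset.sum_map]; rfl
    _ = if (Fintype.card F - 1) ∣ m then -1 else 0 := FiniteField.sum_pow_units F m

lemma aux_key (q ℓ n r : ℕ) (hq : 3 ≤ q) (hℓn : ℓ = q * n + 1) (hn : 1 ≤ n)
    (hs : r % ℓ % q ≠ 1) : ∃ k₀, k₀ ≤ (q-1)*n ∧ ℓ ∣ (r * n + k₀) := by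
  have hℓpos : 0 < ℓ := by omega
  obtain ⟨r₀, hr₀eq⟩ : ∃ x, x = r % ℓ := ⟨_, rfl⟩
  have hr₀ : r₀ < ℓ := hr₀eq ▸ Nat.mod_lt _ hℓpos
  obtain ⟨t, s, hts, hslt, hsne⟩ : ∃ t s, q * t + s = r₀ ∧ s < q ∧ s ≠ 1 := by
    refine ⟨r₀ / q, r₀ % q, Nat.div_add_mod r₀ q, Nat.mod_lt _ (by omega), ?_⟩
    rw [hr₀eq]; exact hs
  suffices h : ∃ k₀, k₀ ≤ (q-1)*n ∧ ℓ ∣ (r₀ * n + k₀) by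
    obtain ⟨k₀, h1, h2⟩ := h
    refine ⟨k₀, h1, ?_⟩
    have hcong : r * n + k₀ ≡ r₀ * n + k₀ [MOD ℓ] := by
      rw [hr₀eq]
      exact ((Nat.mod_modEq r ℓ).symm.mul_right n).add_right k₀
    exact (Nat.modEq_zero_iff_dvd).mp (hcong.trans (Nat.modEq_zero_iff_dvd.mpr h2))
  have hqn : r₀ ≤ q * n := by omega
  have hqn1 : (q-1) * n + n = q * n := by
    have : (q - 1 + 1) * n = q * n := by congr 1; omega
    rw [← this]; ring
  rcases Nat.eq_zero_or_pos s with hs0 | hspos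
  · -- s = 0 : take k₀ = t
    have hqt : q * t = r₀ := by omega
    have hmul0 : q * t ≤ q * n := by omega
    have htn : t ≤ n := Nat.le_of_mul_le_mul_left hmul0 (by omega)
    have hle : t ≤ (q-1)*n := le_trans htn (Nat.le_mul_of_pos_left n (by omega))
    refine ⟨t, hle, ⟨t, ?_⟩⟩
    rw [hℓn, ← hqt]
    ring
  · -- s ≥ 2
    have hs2 : 2 ≤ s := by omega
    have hmul : q * t < q * n := by omega
    have htn : t < n := Nat.lt_of_mul_lt_mul_left hmul
    have hsq : s ≤ q - 1 := by omega
    have hsnA : s * n ≤ (q-1) * n := Nat.mul_le_mul_right n hsq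
    have h2n : 2 * n ≤ s * n := Nat.mul_le_mul_right n hs2
    have hsnle : s * n ≤ ℓ + t := by omega
    have hbound : ℓ + t ≤ (q-1)*n + s * n := by omega
    refine ⟨ℓ + t - s * n, Nat.sub_le_iff_le_add.mpr (by omega), ?_⟩
    have hcast : ((r₀ * n + (ℓ + t - s * n) : ℕ) : ℤ) = (ℓ : ℤ) * (t + 1) := by
      push_cast [hsnle]
      have hts' : (q : ℤ) * t + s = r₀ := by exact_mod_cast hts
      have hℓ' : (ℓ : ℤ) = q * n + 1 := by exact_mod_cast hℓn
      rw [← hts', hℓ']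
      ring
    have hdvd : (ℓ : ℤ) ∣ ((r₀ * n + (ℓ + t - s * n) : ℕ) : ℤ) := ⟨t + 1, hcast⟩
    exact_mod_cast hdvd


/-- If the least nonnegative residue of `r` modulo `ℓ = q^{e-1} + ⋯ + q + 1` is not of
the form `hq + 1` for any integer `h`, then `f(x) = x^r (x^{q-1} + a)` does not permute
`F_{q^e}`. -/
theorem stmt_11 (p m q e : ℕ) (hp : p.Prime) (hm : 0 < m) (hq : q = p ^ m)
    (hq3 : 3 ≤ q) (he : 2 ≤ e)
    {F : Type*} [Field F] [Fintype F] (hF : Fintype.card F = q ^ e)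
    (a : F) (ha : a ≠ 0) (r : ℕ) (hr : 1 ≤ r)
    (ℓ : ℕ) (hℓ : ℓ = ∑ i ∈ Finset.range e, q ^ i)
    (hres : ∀ h : ℤ, ((r % ℓ : ℕ) : ℤ) ≠ h * q + 1) :
    ¬ Function.Bijective (fun x : F => x ^ r * (x ^ (q - 1) + a)) := by
  intro hbij
  classical
  have hq1 : 1 ≤ q := by omega
  obtain ⟨d, rfl⟩ : ∃ d, e = d + 1 := ⟨e - 1, by omega⟩
  have hd1 : 1 ≤ d := by omega
  set n := ∑ i ∈ Finset.range d, q ^ i with hndef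
  have hn1 : 1 ≤ n := by
    have h0 : (0:ℕ) ∈ Finset.range d := Finset.mem_range.mpr (by omega)
    calc 1 = q ^ 0 := (pow_zero q).symm
    _ ≤ n := Finset.single_le_sum (f := fun i => q ^ i) (fun i _ => Nat.zero_le _) h0
  have hgn : (q-1) * n = q ^ d - 1 := aux_geom q hq1 d
  have hgℓ : (q-1) * ℓ = q ^ (d+1) - 1 := by rw [hℓ]; exact aux_geom q hq1 (d+1)
  have hℓn : ℓ = q * n + 1 := by
    rw [hℓ, Finset.sum_range_succ']
    simp only [pow_zero, pow_succ']
    rw [← Finset.mul_sum]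
  set N := (q-1) * n with hNdef
  have hN1 : 1 ≤ N := by
    have : 1 * 1 ≤ (q-1) * n := Nat.mul_le_mul (by omega) hn1
    omega
  have hnℓ : n < ℓ := by
    have : 1 * n ≤ q * n := Nat.mul_le_mul_right n hq1
    omega
  have hNℓ : N < ℓ := by
    have : (q-1) * n ≤ q * n := Nat.mul_le_mul_right n (by omega)
    omega
  have hcard1 : Fintype.card F - 1 = (q-1) * ℓ := by rw [hF, hgℓ]
  have hs : r % ℓ % q ≠ 1 := by
    intro h1
    have hdm : (r % ℓ / q) * q + r % ℓ % q = r % ℓ := Nat.div_add_mod' _ _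
    refine hres ((r % ℓ / q : ℕ) : ℤ) ?_
    rw [h1] at hdm
    conv_lhs => rw [← hdm]
    push_cast
    ring
  obtain ⟨k₀, hk₀N, hk₀d⟩ := aux_key q ℓ n r hq3 hℓn hn1 hs
  -- nonzero exponents
  have hexp : ∀ k : ℕ, r * N + (q-1) * k ≠ 0 := by
    intro k
    have : 1 * 1 ≤ r * N := Nat.mul_le_mul hr hN1
    omega
  -- divisibility translation
  have hdvd_iff : ∀ k : ℕ, ((Fintype.card F - 1) ∣ (r * N + (q-1) * k)) ↔ ℓ ∣ (r * n + k) := by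
    intro k
    rw [hcard1]
    have hE : r * N + (q-1) * k = (q-1) * (r * n + k) := by rw [hNdef]; ring
    rw [hE]
    exact Nat.mul_dvd_mul_iff_left (show 0 < q - 1 by omega)
  have huniq : ∀ k : ℕ, k ≤ N → ℓ ∣ (r * n + k) → k = k₀ := by
    intro k hk hdvd
    have d1 : ℓ ∣ k₀ - k := by
      have h := Nat.dvd_sub hk₀d hdvd
      rwa [Nat.add_sub_add_left] at h
    have d2 : ℓ ∣ k - k₀ := by
      have h := Nat.dvd_sub hdvd hk₀d
      rwa [Nat.add_sub_add_left] at h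
    by_contra hne
    rcases Nat.lt_or_ge k k₀ with h | h
    · have := Nat.le_of_dvd (by omega) d1; omega
    · have := Nat.le_of_dvd (by omega) d2; omega
  -- the two evaluations of the power sum
  have hperm : ∑ x : F, (x ^ r * (x ^ (q-1) + a)) ^ N = ∑ x : F, x ^ N :=
    Fintype.sum_bijective _ hbij _ _ (fun x => rfl)
  have hRHS : ∑ x : F, x ^ N = 0 := by
    apply FiniteField.sum_pow_lt_card_sub_one
    rw [hcard1]
    calc N = (q-1) * n := rfl
    _ < (q-1) * ℓ := by
        exact (mul_lt_mul_iff_right₀ (show 0 < q - 1 by omega)).mpr hnℓ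
  have hexpand : ∀ x : F, (x ^ r * (x ^ (q-1) + a)) ^ N
      = ∑ k ∈ Finset.range (N+1), x ^ (r * N + (q-1) * k) * (a ^ (N-k) * (N.choose k : F)) := by
    intro x
    rw [mul_pow, ← pow_mul, add_pow, Finset.mul_sum]
    refine Finset.sum_congr rfl (fun k hk => ?_)
    rw [← pow_mul, pow_add]
    ring
  have hLHS : ∑ x : F, (x ^ r * (x ^ (q-1) + a)) ^ N = -(a ^ (N-k₀) * (N.choose k₀ : F)) := by
    calc ∑ x : F, (x ^ r * (x ^ (q-1) + a)) ^ N
        = ∑ x : F, ∑ k ∈ Finset.range (N+1),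
            x ^ (r * N + (q-1) * k) * (a ^ (N-k) * (N.choose k : F)) :=
          Finset.sum_congr rfl (fun x _ => hexpand x)
      _ = ∑ k ∈ Finset.range (N+1), ∑ x : F,
            x ^ (r * N + (q-1) * k) * (a ^ (N-k) * (N.choose k : F)) := Finset.sum_comm
      _ = ∑ k ∈ Finset.range (N+1),
            (∑ x : F, x ^ (r * N + (q-1) * k)) * (a ^ (N-k) * (N.choose k : F)) := by
          refine Finset.sum_congr rfl (fun k _ => ?_)
          rw [Finset.sum_mul]
      _ = -(a ^ (N-k₀) * (N.choose k₀ : F)) := by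
          rw [Finset.sum_eq_single_of_mem k₀ (Finset.mem_range.mpr (by omega))]
          · rw [aux_sum_pow F _ (hexp k₀), if_pos ((hdvd_iff k₀).mpr hk₀d)]
            ring
          · intro k hkmem hkne
            rw [aux_sum_pow F _ (hexp k), if_neg, zero_mul]
            intro hdd
            exact hkne (huniq k (by exact Nat.lt_succ_iff.mp (Finset.mem_range.mp hkmem))
              ((hdvd_iff k).mp hdd))
  have hzero : a ^ (N-k₀) * (N.choose k₀ : F) = 0 := by
    have h := hLHS.symm.trans (hperm.trans hRHS)
    exact neg_eq_zero.mp h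
  have hC0 : ((N.choose k₀ : ℕ) : F) = 0 := by
    rcases mul_eq_zero.mp hzero with h | h
    · exact absurd h (pow_ne_zero _ ha)
    · exact h
  -- characteristic
  have hpF : (p : F) = 0 := by
    have hcard0 : ((Fintype.card F : ℕ) : F) = 0 := FiniteField.cast_card_eq_zero F
    rw [hF, hq, ← pow_mul] at hcard0
    have h2 : ((p : F)) ^ (m * (d+1)) = 0 := by exact_mod_cast hcard0
    exact pow_eq_zero_iff (by positivity) |>.mp h2
  have hchar : ringChar F ∣ p := (ringChar.spec F p).mp hpF
  have hrc : ringChar F = p := by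
    rcases (Nat.Prime.eq_one_or_self_of_dvd hp _ hchar) with h | h
    · exfalso
      have h1 : ((1:ℕ) : F) = 0 := (ringChar.spec F 1).mpr (h ▸ dvd_refl _)
      simp at h1
    · exact h
  have hpd : p ∣ N.choose k₀ := by
    rw [← hrc]
    exact (ringChar.spec F _).mp hC0
  have hNform : N = p ^ (m * d) - 1 := by rw [hgn, hq, ← pow_mul]
  rw [hNform] at hpd
  exact aux_choose_pow hp (m * d) k₀ (by rw [← hNform]; exact hk₀N) hpd
end

section
/- Let q be a power of an odd prime p, e ≥ 2, a ∈ F_{q^e} nonzero, r ≥ 1, f(x) = x^r(x^{q−1} + a), and ℓ = q^{e−1} + ⋯ + q + 1. If the least nonnegative residue of r modulo ℓ equals h·q + 1 for some nonnegative integer h with p ∤ h, then f does not permute F_{q^e}. -/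
/-- Geometric sum identity in `ℕ`, subtraction-free. -/
lemma geom_aux (q n : ℕ) (hq : 1 ≤ q) :
    (q - 1) * (∑ i ∈ Finset.range n, q ^ i) + 1 = q ^ n := by
  have h := geom_sum_mul ((q : ℤ)) n
  zify [hq]
  push_cast at h ⊢
  linarith

/-- If `n < p` and `d ≤ n` then `p` does not divide `n.choose d`. -/
lemma aux_small (p n d : ℕ) (hp : p.Prime) (hn : n < p) (hd : d ≤ n) :
    ¬ p ∣ n.choose d := by
  intro hdvd
  have h1 : p ∣ n.factorial := by
    have h2 := Nat.choose_mul_factorial_mul_factorial hd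
    exact h2 ▸ (hdvd.mul_right _).mul_right _
  have := (Nat.Prime.dvd_factorial hp).mp h1
  omega

lemma dvd_iff_of_modEq {p a b : ℕ} (h : a ≡ b [MOD p]) : p ∣ a ↔ p ∣ b := by
  rw [← Nat.modEq_zero_iff_dvd, ← Nat.modEq_zero_iff_dvd]
  exact ⟨h.symm.trans, h.trans⟩

/-- `p` never divides `choose (2p^M - 1) c` for `c ≤ 2p^M - 1`. -/
lemma aux_B (p : ℕ) (hp : p.Prime) :
    ∀ M n c : ℕ, n + 1 = 2 * p ^ M → c ≤ n → ¬ p ∣ n.choose c := by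
  haveI : Fact p.Prime := ⟨hp⟩
  intro M
  induction M with
  | zero =>
    intro n c hn hc hdvd
    rw [pow_zero, mul_one] at hn
    have hn1 : n = 1 := by omega
    subst hn1
    interval_cases c <;>
      simp only [Nat.choose_zero_right, Nat.choose_self, Nat.dvd_one] at hdvd <;>
      exact hp.ne_one hdvd
  | succ M ih =>
    intro n c hn hc hdvd
    have hp2 : 2 ≤ p := hp.two_le
    have hpM : 1 ≤ p ^ M := Nat.one_le_pow _ _ (by omega)
    obtain ⟨n₀, hn₀⟩ : ∃ n₀, n₀ + 1 = 2 * p ^ M := ⟨2 * p ^ M - 1, by omega⟩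
    obtain ⟨t, ht⟩ : ∃ t, t + 1 = p := ⟨p - 1, by omega⟩
    have hsplit : n = p * n₀ + t := by
      have h1 : n + 1 = p * n₀ + t + 1 := by
        rw [hn]
        have h3 : 2 * p ^ (M + 1) = p * (2 * p ^ M) := by ring
        rw [h3, ← hn₀]
        have h4 : p * (n₀ + 1) = p * n₀ + p := by ring
        rw [h4, ← ht]
        ring
      exact Nat.add_right_cancel h1
    have hnp : n % p = t := by
      rw [hsplit, Nat.mul_add_mod]
      exact Nat.mod_eq_of_lt (by omega)
    have hdiv : n / p = n₀ := by
      rw [hsplit, Nat.mul_add_div (by omega : 0 < p), Nat.div_eq_of_lt (by omega), add_zero]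
    have hmod := Choose.choose_modEq_choose_mod_mul_choose_div_nat (p := p) (n := n) (k := c)
    have hdvd2 : p ∣ Nat.choose (n % p) (c % p) * Nat.choose (n / p) (c / p) :=
      (dvd_iff_of_modEq hmod).mp hdvd
    have hcp : c % p < p := Nat.mod_lt _ (by omega)
    rcases (Nat.Prime.dvd_mul hp).1 hdvd2 with h' | h'
    · rw [hnp] at h'
      exact aux_small p t (c % p) hp (by omega) (by omega) h'
    · rw [hdiv] at h'
      refine ih n₀ (c / p) hn₀ ?_ h'
      calc c / p ≤ n / p := Nat.div_le_div_right hc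
      _ = n₀ := hdiv

/-- `p` does not divide `choose (2p^M - 2) j` when `j ≤ 2p^M - 2` and `j % p ≠ p - 1`. -/
lemma aux_key_s13 (p M n j : ℕ) (hp : p.Prime) (hp3 : 3 ≤ p) (hM : 1 ≤ M)
    (hn : n + 2 = 2 * p ^ M) (hj : j ≤ n) (hjm : j % p ≠ p - 1) : ¬ p ∣ n.choose j := by
  haveI : Fact p.Prime := ⟨hp⟩
  intro hdvd
  obtain ⟨M', rfl⟩ : ∃ M', M = M' + 1 := ⟨M - 1, by omega⟩
  have hpM : 1 ≤ p ^ M' := Nat.one_le_pow _ _ (by omega)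
  obtain ⟨n₀, hn₀⟩ : ∃ n₀, n₀ + 1 = 2 * p ^ M' := ⟨2 * p ^ M' - 1, by omega⟩
  obtain ⟨t, ht⟩ : ∃ t, t + 2 = p := ⟨p - 2, by omega⟩
  have hsplit : n = p * n₀ + t := by
    have h1 : n + 2 = p * n₀ + t + 2 := by
      rw [hn]
      have h3 : 2 * p ^ (M' + 1) = p * (2 * p ^ M') := by ring
      rw [h3, ← hn₀]
      have h4 : p * (n₀ + 1) = p * n₀ + p := by ring
      rw [h4, ← ht]
      ring
    exact Nat.add_right_cancel h1
  have hnp : n % p = t := by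
    rw [hsplit, Nat.mul_add_mod]
    exact Nat.mod_eq_of_lt (by omega)
  have hdiv : n / p = n₀ := by
    rw [hsplit, Nat.mul_add_div (by omega : 0 < p), Nat.div_eq_of_lt (by omega), add_zero]
  have hmod := Choose.choose_modEq_choose_mod_mul_choose_div_nat (p := p) (n := n) (k := j)
  have hdvd2 : p ∣ Nat.choose (n % p) (j % p) * Nat.choose (n / p) (j / p) :=
    (dvd_iff_of_modEq hmod).mp hdvd
  have hjp : j % p < p := Nat.mod_lt _ (by omega)
  rcases (Nat.Prime.dvd_mul hp).1 hdvd2 with h' | h'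
  · rw [hnp] at h'
    exact aux_small p t (j % p) hp (by omega) (by omega) h'
  · rw [hdiv] at h'
    refine aux_B p hp M' n₀ (j / p) hn₀ ?_ h'
    calc j / p ≤ n / p := Nat.div_le_div_right hj
    _ = n₀ := hdiv

/-- Power sums over a finite field. -/
lemma aux_sum (K : Type*) [Field K] [Fintype K] (N : ℕ) (hN : N ≠ 0) :
    ∑ x : K, x ^ N = if (Fintype.card K - 1) ∣ N then -1 else 0 := by
  classical
  let φ : Kˣ ↪ K := ⟨fun x ↦ x, Units.val_injective⟩
  have huniv : Finset.univ.map φ = Finset.univ \ {0} := by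
    ext x
    simpa only [Finset.mem_map, Finset.mem_univ, Function.Embedding.coeFn_mk, true_and,
      Finset.mem_sdiff, Finset.mem_singleton, φ] using
      (show (∃ a : Kˣ, (a : K) = x) ↔ x ≠ 0 from isUnit_iff_ne_zero)
  calc
    ∑ x : K, x ^ N = ∑ x ∈ Finset.univ \ {(0 : K)}, x ^ N := by
      rw [← Finset.sum_sdiff (Finset.subset_univ ({0} : Finset K)), Finset.sum_singleton,
        zero_pow hN, add_zero]
    _ = ∑ x : Kˣ, (x ^ N : K) := by
      simp [φ, ← huniv, Finset.univ.sum_map φ]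
    _ = if (Fintype.card K - 1) ∣ N then -1 else 0 := FiniteField.sum_pow_units K N

/-- For `q` a power of an odd prime `p`, if the least nonnegative residue of `r`
modulo `ℓ = q^{e-1} + ⋯ + q + 1` equals `hq + 1` with `p ∤ h`, then
`f(x) = x^r (x^{q-1} + a)` does not permute `F_{q^e}`. -/
theorem stmt_13 (p m q e : ℕ) (hp : p.Prime) (hpodd : Odd p) (hm : 0 < m)
    (hq : q = p ^ m) (he : 2 ≤ e)
    {F : Type*} [Field F] [Fintype F] (hF : Fintype.card F = q ^ e)
    (a : F) (ha : a ≠ 0) (r : ℕ) (hr : 1 ≤ r)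
    (ℓ : ℕ) (hℓ : ℓ = ∑ i ∈ Finset.range e, q ^ i)
    (h : ℕ) (hres : r % ℓ = h * q + 1) (hnd : ¬ p ∣ h) :
    ¬ Function.Bijective (fun x : F => x ^ r * (x ^ (q - 1) + a)) := by
  intro hBij
  -- basic numerology
  have hp2ne : p ≠ 2 := by rintro rfl; exact (by decide : ¬ Odd 2) hpodd
  have hp3 : 3 ≤ p := by have := hp.two_le; omega
  have hq3 : 3 ≤ q := by
    rw [hq]
    calc 3 ≤ p := hp3
    _ ≤ p ^ m := Nat.le_self_pow (by omega) p
  have hpq : p ∣ q := hq ▸ dvd_pow_self p hm.ne'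
  obtain ⟨E, rfl⟩ : ∃ E, e = E + 2 := ⟨e - 2, by omega⟩
  set l' := ∑ i ∈ Finset.range (E + 1), q ^ i with hl'def
  set l'' := ∑ i ∈ Finset.range E, q ^ i with hl''def
  set Q := q ^ (E + 1) with hQdef
  have hQ3 : 3 ≤ Q := by
    rw [hQdef]
    calc 3 ≤ q := hq3
    _ ≤ q ^ (E + 1) := Nat.le_self_pow (by omega) q
  have hgl' : (q - 1) * l' + 1 = Q := by
    rw [hl'def, hQdef]; exact geom_aux q (E + 1) (by omega)
  have hglℓ : (q - 1) * ℓ + 1 = q ^ (E + 2) := by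
    rw [hℓ]; exact geom_aux q (E + 2) (by omega)
  have hℓq : ℓ = q * l' + 1 := by
    rw [hℓ, hl'def]
    rw [Finset.sum_range_succ' (fun i => q ^ i) (E + 1), pow_zero]
    congr 1
    rw [Finset.mul_sum]
    exact Finset.sum_congr rfl fun i _ => pow_succ' q i
  have hl'q : l' = q * l'' + 1 := by
    rw [hl'def, hl''def]
    rw [Finset.sum_range_succ' (fun i => q ^ i) E, pow_zero]
    congr 1
    rw [Finset.mul_sum]
    exact Finset.sum_congr rfl fun i _ => pow_succ' q i
  have hℓ2 : ℓ = l' + Q := by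
    rw [hℓ, hl'def, hQdef, Finset.sum_range_succ]
  have hl'pos : 1 ≤ l' := by rw [hl'q]; omega
  have hℓpos : 0 < ℓ := by rw [hℓq]; exact Nat.succ_pos _
  have h3l' : 3 * l' ≤ q * l' := Nat.mul_le_mul_right l' hq3
  have h2l'ℓ : 2 * l' + l' + 1 ≤ ℓ := by rw [hℓq]; linarith
  have hl'Q : l' < Q := by
    have h1 : 2 * l' ≤ (q - 1) * l' := by
      have := Nat.mul_le_mul_right l' (show 2 ≤ q - 1 by omega)
      linarith
    linarith [hgl', hl'pos]
  -- h < l'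
  have hhl' : h < l' := by
    have hrlt : r % ℓ < ℓ := Nat.mod_lt _ hℓpos
    have h1 : h * q + 1 < q * l' + 1 := by rw [← hℓq, ← hres]; exact hrlt
    have h2 : q * h < q * l' := by rw [mul_comm q h]; linarith
    exact Nat.lt_of_mul_lt_mul_left h2
  -- define k and i0
  obtain ⟨k, hk⟩ : ∃ k, k + 2 = 2 * Q := ⟨2 * Q - 2, by omega⟩
  have hks : k = (q - 1) * (2 * l') := by
    have h1 : k + 2 = (q - 1) * (2 * l') + 2 := by
      rw [hk, ← hgl']; ring
    exact Nat.add_right_cancel h1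
  obtain ⟨i0, hi0⟩ : ∃ i0, i0 + 2 * l' = ℓ + 2 * h := ⟨ℓ + 2 * h - 2 * l', by omega⟩
  have hkey : 2 * l' * (h * q + 1) + i0 = (2 * h + 1) * ℓ := by
    have haux : (2 * h + 1) * ℓ + 2 * l' = (2 * l' * (h * q + 1) + i0) + 2 * l' := by
      calc (2 * h + 1) * ℓ + 2 * l' = 2 * l' * (h * q + 1) + (ℓ + 2 * h) := by rw [hℓq]; ring
      _ = 2 * l' * (h * q + 1) + (i0 + 2 * l') := by rw [hi0]
      _ = (2 * l' * (h * q + 1) + i0) + 2 * l' := by ring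
    exact (Nat.add_right_cancel haux).symm
  have hdvd0 : ℓ ∣ 2 * l' * r + i0 := by
    have heq : 2 * l' * r + i0 = ℓ * (2 * l' * (r / ℓ) + (2 * h + 1)) := by
      conv_lhs => rw [← Nat.div_add_mod r ℓ]
      rw [hres, Nat.mul_add, Nat.add_assoc, hkey]
      ring
    exact ⟨_, heq⟩
  have hi0k : i0 ≤ k := by omega
  -- uniqueness
  have huniq : ∀ i : ℕ, i ≤ k → ℓ ∣ 2 * l' * r + i → i = i0 := by
    intro i hik hdvdi
    have hmodeq : i % ℓ = i0 % ℓ :=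
      Nat.ModEq.add_left_cancel' (2 * l' * r)
        (((Nat.modEq_zero_iff_dvd).mpr hdvdi).trans ((Nat.modEq_zero_iff_dvd).mpr hdvd0).symm)
    have hi0ℓ : i0 < ℓ := by omega
    have hkb : k < i0 + ℓ := by omega
    have hi2ℓ : i < ℓ * 2 := by omega
    have hidiv : i / ℓ ≤ 1 := Nat.lt_succ_iff.mp (Nat.div_lt_of_lt_mul hi2ℓ)
    have heq := Nat.div_add_mod i ℓ
    have hi0m : i0 % ℓ = i0 := Nat.mod_eq_of_lt hi0ℓ
    rcases Nat.le_one_iff_eq_zero_or_eq_one.mp hidiv with h' | h'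
    · rw [h', Nat.mul_zero, Nat.zero_add] at heq
      omega
    · rw [h', Nat.mul_one] at heq
      omega
  -- card facts
  have hcard1 : Fintype.card F - 1 = (q - 1) * ℓ := by
    rw [hF, ← hglℓ]; simp
  have hQe : q * Q = q ^ (E + 2) := by
    rw [hQdef, ← pow_succ']
  have hiff : ∀ i : ℕ, i ≤ k → ((Fintype.card F - 1) ∣ r * k + (q - 1) * i ↔ i = i0) := by
    intro i hik
    rw [hcard1]
    have hrw : r * k + (q - 1) * i = (q - 1) * (2 * l' * r + i) := by rw [hks]; ring
    rw [hrw, Nat.mul_dvd_mul_iff_left (show 0 < q - 1 by omega)]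
    exact ⟨huniq i hik, fun hE => hE ▸ hdvd0⟩
  -- the main sum computation
  have hkne : k ≠ 0 := by omega
  have main : ∑ x : F, (x ^ r * (x ^ (q - 1) + a)) ^ k
      = -(a ^ (k - i0) * (k.choose i0 : F)) := by
    have expand : ∀ x : F, (x ^ r * (x ^ (q - 1) + a)) ^ k
        = ∑ i ∈ Finset.range (k + 1),
            x ^ (r * k + (q - 1) * i) * (a ^ (k - i) * (k.choose i : F)) := by
      intro x
      rw [mul_pow, add_pow, Finset.mul_sum]
      refine Finset.sum_congr rfl fun i _ => ?_
      rw [← pow_mul, ← pow_mul, pow_add]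
      ring
    calc
      ∑ x : F, (x ^ r * (x ^ (q - 1) + a)) ^ k
          = ∑ x : F, ∑ i ∈ Finset.range (k + 1),
              x ^ (r * k + (q - 1) * i) * (a ^ (k - i) * (k.choose i : F)) :=
        Finset.sum_congr rfl fun x _ => expand x
      _ = ∑ i ∈ Finset.range (k + 1), ∑ x : F,
              x ^ (r * k + (q - 1) * i) * (a ^ (k - i) * (k.choose i : F)) :=
        Finset.sum_comm
      _ = ∑ i ∈ Finset.range (k + 1),
            (if i = i0 then (-1 : F) else 0) * (a ^ (k - i) * (k.choose i : F)) := by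
        refine Finset.sum_congr rfl fun i hi => ?_
        rw [← Finset.sum_mul]
        congr 1
        have hN : r * k + (q - 1) * i ≠ 0 := by
          intro h0
          exact (Nat.mul_ne_zero (by omega) hkne) (Nat.eq_zero_of_add_eq_zero_right h0)
        rw [aux_sum F (r * k + (q - 1) * i) hN]
        exact if_congr (hiff i (Nat.lt_succ_iff.mp (Finset.mem_range.mp hi))) rfl rfl
      _ = -(a ^ (k - i0) * (k.choose i0 : F)) := by
        simp only [ite_mul, neg_one_mul, zero_mul]
        rw [Finset.sum_ite_eq' (Finset.range (k + 1)) i0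
          (fun i => -(a ^ (k - i) * (k.choose i : F))),
          if_pos (Finset.mem_range.mpr (by omega))]
  -- apply bijectivity
  have hsum2 : ∑ x : F, x ^ k = 0 := by
    refine FiniteField.sum_pow_lt_card_sub_one F k ?_
    rw [hcard1]
    have h5 : 3 * Q ≤ q * Q := Nat.mul_le_mul_right Q hq3
    have h6 : (q - 1) * ℓ + 1 = q * Q := by rw [hQe]; exact hglℓ
    linarith
  have hzero : (0 : F) = -(a ^ (k - i0) * (k.choose i0 : F)) := by
    calc (0 : F) = ∑ x : F, x ^ k := hsum2.symm
    _ = ∑ x : F, (x ^ r * (x ^ (q - 1) + a)) ^ k := (hBij.sum_comp (fun y : F => y ^ k)).symm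
    _ = -(a ^ (k - i0) * (k.choose i0 : F)) := main
  have hCC : (k.choose i0 : F) = 0 := by
    have h1 : a ^ (k - i0) * (k.choose i0 : F) = 0 := by
      have h2 := hzero
      rw [eq_comm, neg_eq_zero] at h2
      exact h2
    rcases mul_eq_zero.mp h1 with h' | h'
    · exact absurd h' (pow_ne_zero _ ha)
    · exact h'
  -- characteristic of F is p
  have hcharF : CharP F p := by
    haveI hinst : CharP F (ringChar F) := ringChar.charP F
    have hprime : (ringChar F).Prime := CharP.char_is_prime F (ringChar F)
    have hdvdq : (ringChar F) ∣ p ^ (m * (E + 2)) := by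
      have h0 : ((p ^ (m * (E + 2)) : ℕ) : F) = 0 := by
        rw [pow_mul, ← hq, ← hF]
        exact FiniteField.cast_card_eq_zero F
      exact (CharP.cast_eq_zero_iff F (ringChar F) _).mp h0
    have hrc : ringChar F = p := by
      have h1 : ringChar F ∣ p := hprime.dvd_of_dvd_pow hdvdq
      exact (Nat.prime_dvd_prime_iff_eq hprime hp).mp h1
    rw [← hrc]; exact hinst
  have hpdvd : p ∣ k.choose i0 := by
    haveI := hcharF
    exact (CharP.cast_eq_zero_iff F p _).mp hCC
  -- Lucas contradiction
  have hQp : Q = p ^ (m * (E + 1)) := by rw [hQdef, hq, ← pow_mul]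
  have hjm : i0 % p ≠ p - 1 := by
    intro hbad
    have hqmod : q ≡ 0 [MOD p] := (Nat.modEq_zero_iff_dvd).mpr hpq
    have hl'mod : l' ≡ 1 [MOD p] := by
      have h1 : q * l'' + 1 ≡ 0 * l'' + 1 [MOD p] := (hqmod.mul_right l'').add_right 1
      rw [hl'q]
      simpa using h1
    have hℓmod : ℓ ≡ 1 [MOD p] := by
      have h1 : q * l' + 1 ≡ 0 * l' + 1 [MOD p] := (hqmod.mul_right l').add_right 1
      rw [hℓq]
      simpa using h1
    have hp1 : p ∣ i0 + 1 := by
      have h1p : 1 % p = 1 := Nat.mod_eq_of_lt (by omega)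
      have hm0 : (i0 + 1) % p = 0 := by
        rw [Nat.add_mod, hbad, h1p, (show p - 1 + 1 = p by omega), Nat.mod_self]
      exact Nat.dvd_of_mod_eq_zero hm0
    have hc1 : i0 + 2 * l' ≡ i0 + 2 * 1 [MOD p] :=
      (Nat.ModEq.refl i0).add ((Nat.ModEq.refl 2).mul hl'mod)
    have hc2 : i0 + 2 * l' ≡ 1 + 2 * h [MOD p] := by
      rw [hi0]
      exact hℓmod.add_right _
    have hc3 : i0 + 2 ≡ 1 + 2 * h [MOD p] := by
      have := hc1.symm.trans hc2
      simpa using this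
    have h0 : i0 + 1 ≡ 0 [MOD p] := (Nat.modEq_zero_iff_dvd).mpr hp1
    have h2 : i0 + 2 ≡ 1 [MOD p] := by
      have := h0.add_right 1
      exact this
    have h3 : (1 : ℕ) + 0 ≡ 1 + 2 * h [MOD p] := by
      simpa using h2.symm.trans hc3
    have hc4 : p ∣ 2 * h := (Nat.modEq_zero_iff_dvd).mp (Nat.ModEq.add_left_cancel' 1 h3).symm
    rcases (Nat.Prime.dvd_mul hp).mp hc4 with h' | h'
    · have := Nat.le_of_dvd (by omega) h'
      omega
    · exact hnd h'
  exact aux_key_s13 p (m * (E + 1)) k i0 hp hp3 (Nat.mul_pos hm (Nat.succ_pos E)) (by rw [hk, hQp])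
    hi0k hjm hpdvd
end
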